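/- Let s ⊆ ℝ³ be an open connected set and let v : ℝ³ → ℝ³ be C² on s such that at every point x ∈ s the derivative Dv(x) is an antisymmetric linear map (⟨Dv(x)u, w⟩ = −⟨u, Dv(x)w⟩ for all u, w ∈ ℝ³). Then Dv is constant on s; i.e., there exist an antisymmetric 3×3 matrix Ω and a vector W ∈ ℝ³ such that v(x) = Ωx + W for all x ∈ s. (The infinitesimal rigid motions Y^a = Ω^a_b x^b + W^a are exactly the vector fields inducing no deformation of the Euclidean metric.) -/

import Mathlib

open Matrix
open scoped RealInnerProductSpace
noncomputable section

/-- ℝ³ with the standard inner product. -/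
abbrev E3 := EuclideanSpace ℝ (Fin 3)

/-- A function with zero derivative at every point of an open preconnected set is
constant on that set. -/
lemma aux_const_on_of_hasFDerivAt_zero {F : Type*} [NormedAddCommGroup F]
    [NormedSpace ℝ F] {s : Set E3} (hso : IsOpen s) (hsc : IsPreconnected s)
    {f : E3 → F} (hf : ∀ x ∈ s, HasFDerivAt f (0 : E3 →L[ℝ] F) x)
    {x y : E3} (hx : x ∈ s) (hy : y ∈ s) : f y = f x := by
  classical
  set t : Set E3 := {z | z ∈ s ∧ f z = f x} with ht_def
  set u : Set E3 := {z | z ∈ s ∧ f z ≠ f x} with hu_def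
  have ht_open : IsOpen t := by
    rw [isOpen_iff_mem_nhds]
    intro z hz
    obtain ⟨ε, hε, hball⟩ := Metric.isOpen_iff.1 hso z hz.1
    have hconst : ∀ w ∈ Metric.ball z ε, f w = f z := by
      intro w hw
      have hdiff : DifferentiableOn ℝ f (Metric.ball z ε) := fun p hp =>
        (hf p (hball hp)).differentiableAt.differentiableWithinAt
      have hzero : ∀ p ∈ Metric.ball z ε, fderivWithin ℝ f (Metric.ball z ε) p = 0 := by
        intro p hp
        rw [fderivWithin_of_isOpen Metric.isOpen_ball hp]
        exact (hf p (hball hp)).fderiv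
      exact (convex_ball z ε).is_const_of_fderivWithin_eq_zero hdiff hzero hw
        (Metric.mem_ball_self hε)
    filter_upwards [Metric.ball_mem_nhds z hε] with w hw
    exact ⟨hball hw, (hconst w hw).trans hz.2⟩
  have hu_open : IsOpen u := by
    rw [isOpen_iff_mem_nhds]
    intro z hz
    have hcont : ContinuousAt f z := (hf z hz.1).differentiableAt.continuousAt
    filter_upwards [hcont.eventually_ne hz.2, hso.mem_nhds hz.1] with w hw1 hw2
    exact ⟨hw2, hw1⟩
  by_contra hne
  have hsub : s ⊆ t ∪ u := by
    intro z hz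
    by_cases h : f z = f x
    · exact Or.inl ⟨hz, h⟩
    · exact Or.inr ⟨hz, h⟩
  obtain ⟨z, hzs, hzt, hzu⟩ := hsc t u ht_open hu_open hsub ⟨x, hx, hx, rfl⟩
    ⟨y, hy, hy, hne⟩
  exact hzu.2 hzt.2

/-- If `v` is C² on an open connected set `s ⊆ ℝ³` and its derivative `Dv(x)`
is antisymmetric at every point of `s`, then `v` is an infinitesimal rigid
motion on `s`: there are an antisymmetric matrix `Ω` and a vector `W` with
`v(x) = Ωx + W` on `s` (in particular `Dv` is constant on `s`). -/
theorem antisymmetric_gradient_is_rigid_motion (s : Set E3)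
    (hso : IsOpen s) (hsc : IsConnected s) (v : E3 → E3)
    (hv : ContDiffOn ℝ 2 v s)
    (hanti : ∀ x ∈ s, ∀ u w : E3, ⟪fderiv ℝ v x u, w⟫ = -⟪u, fderiv ℝ v x w⟫) :
    ∃ (Ω : Matrix (Fin 3) (Fin 3) ℝ) (W : Fin 3 → ℝ), Ωᵀ = -Ω ∧
      ∀ x ∈ s, ∀ a, v x a = (∑ b, Ω a b * x b) + W a := by
  classical
  obtain ⟨x₀, hx₀⟩ := hsc.nonempty
  have hC2 : ∀ x ∈ s, ContDiffAt ℝ 2 v x := fun x hx => hv.contDiffAt (hso.mem_nhds hx)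
  have hd1 : ∀ x ∈ s, DifferentiableAt ℝ v x := fun x hx =>
    (hC2 x hx).differentiableAt (by norm_num)
  have hdg : ∀ x ∈ s, DifferentiableAt ℝ (fderiv ℝ v) x := fun x hx =>
    ((hC2 x hx).fderiv_right (m := 1) le_rfl).differentiableAt (by norm_num)
  -- the second derivative vanishes on s
  have hzero : ∀ x ∈ s, fderiv ℝ (fderiv ℝ v) x = 0 := by
    intro x hx
    set T := fderiv ℝ (fderiv ℝ v) x with hT
    have hsymm : ∀ a b : E3, T a b = T b a := (hC2 x hx).isSymmSndFDerivAt (by simp [minSmoothness])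
    -- differentiate the antisymmetry identity
    have hA : ∀ h u w : E3, ⟪T h u, w⟫ = -⟪u, T h w⟫ := by
      intro h u w
      set Φ : (E3 →L[ℝ] E3) →L[ℝ] ℝ :=
        ((innerSL ℝ w).comp (ContinuousLinearMap.apply ℝ E3 u)) +
        ((innerSL ℝ u).comp (ContinuousLinearMap.apply ℝ E3 w)) with hΦ
      have hg : HasFDerivAt (fderiv ℝ v) T x := (hdg x hx).hasFDerivAt
      have hcomp : HasFDerivAt (fun y => Φ (fderiv ℝ v y)) (Φ.comp T) x :=
        Φ.hasFDerivAt.comp x hg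
      have heq : (fun y => Φ (fderiv ℝ v y)) =ᶠ[nhds x] fun _ => (0 : ℝ) := by
        filter_upwards [hso.mem_nhds hx] with y hy
        have h1 := hanti y hy u w
        simp only [hΦ, ContinuousLinearMap.add_apply, ContinuousLinearMap.comp_apply,
          ContinuousLinearMap.apply_apply, innerSL_apply_apply]
        linarith [h1, real_inner_comm w ((fderiv ℝ v y) u)]
      have h0 : HasFDerivAt (fun _ : E3 => (0 : ℝ)) (Φ.comp T) x :=
        hcomp.congr_of_eventuallyEq heq.symm
      have : Φ.comp T = 0 := h0.unique (hasFDerivAt_const 0 x)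
      have hTh : Φ (T h) = 0 := by
        have := congrArg (fun (L : E3 →L[ℝ] ℝ) => L h) this
        simpa using this
      simp only [hΦ, ContinuousLinearMap.add_apply, ContinuousLinearMap.comp_apply,
        ContinuousLinearMap.apply_apply, innerSL_apply_apply] at hTh
      linarith [hTh, real_inner_comm w ((T h) u)]
    -- braid argument: the trilinear form vanishes
    have hvanish : ∀ h u w : E3, ⟪T h u, w⟫ = 0 := by
      intro h u w
      have s1 : ∀ a b c : E3, ⟪T a b, c⟫ = ⟪T b a, c⟫ := fun a b c => by
        rw [hsymm a b]
      have a1 : ∀ a b c : E3, ⟪T a b, c⟫ = -⟪T a c, b⟫ := fun a b c => by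
        rw [hA a b c, real_inner_comm]
      have e1 : ⟪T h u, w⟫ = -⟪T w h, u⟫ := by rw [a1 h u w, s1 h w]
      have e2 : ⟪T w h, u⟫ = -⟪T u w, h⟫ := by rw [a1 w h u, s1 w u]
      have e3 : ⟪T u w, h⟫ = -⟪T h u, w⟫ := by rw [a1 u w h, s1 u h]
      linarith
    have hTzero : ∀ h u : E3, T h u = 0 := fun h u =>
      inner_self_eq_zero.1 (hvanish h u (T h u))
    ext h u
    simp [hTzero h u]
  -- the first derivative is constant on s
  set L := fderiv ℝ v x₀ with hL
  have hLconst : ∀ x ∈ s, fderiv ℝ v x = L := by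
    intro x hx
    exact aux_const_on_of_hasFDerivAt_zero hso hsc.isPreconnected
      (fun z hz => (hzero z hz) ▸ (hdg z hz).hasFDerivAt) hx₀ hx
  -- v is affine on s
  have hvL : ∀ x ∈ s, v x = L x + (v x₀ - L x₀) := by
    intro x hx
    have key : (fun y => v y - L y) x = (fun y => v y - L y) x₀ := by
      apply aux_const_on_of_hasFDerivAt_zero hso hsc.isPreconnected
        (f := fun y => v y - L y) _ hx₀ hx
      intro z hz
      have := ((hd1 z hz).hasFDerivAt.sub L.hasFDerivAt)
      rwa [hLconst z hz, sub_self] at this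
    have := key
    simp only at this
    rw [eq_comm, sub_eq_sub_iff_add_eq_add] at this
    have h2 : v x = v x₀ + L x - L x₀ := by
      rw [eq_sub_iff_add_eq]
      exact this.symm
    rw [h2]
    abel
  -- build the matrix
  refine ⟨fun a b => L (EuclideanSpace.single b 1) a, fun a => (v x₀ - L x₀) a, ?_, ?_⟩
  · ext a b
    have h1 := hanti x₀ hx₀ (EuclideanSpace.single b (1:ℝ)) (EuclideanSpace.single a (1:ℝ))
    rw [← hL] at h1
    show L (EuclideanSpace.single a 1) b = -(L (EuclideanSpace.single b 1) a)
    have e1 : ⟪L (EuclideanSpace.single b (1:ℝ)), EuclideanSpace.single a (1:ℝ)⟫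
        = L (EuclideanSpace.single b 1) a := by
      rw [real_inner_comm, EuclideanSpace.inner_single_left]; simp
    have e2 : ⟪EuclideanSpace.single b (1:ℝ), L (EuclideanSpace.single a (1:ℝ))⟫
        = L (EuclideanSpace.single a 1) b := by
      rw [EuclideanSpace.inner_single_left]; simp
    rw [e1, e2] at h1
    linarith
  · intro x hx a
    have hrep : x = ∑ b : Fin 3, x b • EuclideanSpace.single b (1:ℝ) := by
      ext i
      rw [show ((∑ b : Fin 3, x b • EuclideanSpace.single b (1:ℝ)) i)
          = ∑ b : Fin 3, (x b • EuclideanSpace.single b (1:ℝ)) i by rw [WithLp.ofLp_sum, Finset.sum_apply]]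
      simp [EuclideanSpace.single_apply]
    have hLx : L x a = ∑ b : Fin 3, L (EuclideanSpace.single b 1) a * x b := by
      conv_lhs => rw [hrep]
      rw [map_sum]
      rw [show ((∑ b : Fin 3, L (x b • EuclideanSpace.single b (1:ℝ))) a)
          = ∑ b : Fin 3, (L (x b • EuclideanSpace.single b (1:ℝ))) a from
          by rw [WithLp.ofLp_sum, Finset.sum_apply]]
      refine Finset.sum_congr rfl fun b _ => ?_
      rw [L.map_smul]
      simp [mul_comm]
    rw [hvL x hx]
    have : (L x + (v x₀ - L x₀)) a = L x a + (v x₀ - L x₀) a := rfl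
    rw [this, hLx]
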